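/- Let K ⊆ H ⊆ G be a chain of groups with [G:H] and [H:K] finite, T a complete set of left coset representatives of H in G, and U a complete set of left coset representatives of K in H. Then the set V = {tu : t ∈ T, u ∈ U} is a complete set of left coset representatives of K in G, and the composition L_U ∘ L_T : Mat(m, RG) → Mat(m[G:K], RK) equals the left regular representation L_V with respect to V. -/

import Mathlib

open Matrix
open scoped Kronecker

/-- A complex matrix representation is irreducible if its degree is positive and it has
no nontrivial invariant subspaces. -/
def IsIrrep {G : Type*} [Group G] {n : ℕ} (ρ : G →* Matrix (Fin n) (Fin n) ℂ) : Prop :=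
  0 < n ∧ ∀ W : Submodule ℂ (Fin n → ℂ),
    (∀ g : G, ∀ v ∈ W, (ρ g).mulVec v ∈ W) → W = ⊥ ∨ W = ⊤

/-- Equivalence of complex matrix representations. -/
def RepEquiv {G : Type*} [Group G] {n m : ℕ} (ρ : G →* Matrix (Fin n) (Fin n) ℂ)
    (σ : G →* Matrix (Fin m) (Fin m) ℂ) : Prop :=
  ∃ e : (Fin n → ℂ) ≃ₗ[ℂ] (Fin m → ℂ), ∀ g v, e ((ρ g).mulVec v) = (σ g).mulVec (e v)

/-- `ρ` is a complete set of pairwise inequivalent irreducible complex matrix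
representations of `G`. -/
def CompleteIrrepFamily (G : Type*) [Group G] {ι : Type*} (d : ι → ℕ)
    (ρ : ∀ i, G →* Matrix (Fin (d i)) (Fin (d i)) ℂ) : Prop :=
  (∀ i, IsIrrep (ρ i)) ∧
  (∀ i j, i ≠ j → ¬ RepEquiv (ρ i) (ρ j)) ∧
  (∀ (n : ℕ) (σ : G →* Matrix (Fin n) (Fin n) ℂ), IsIrrep σ → ∃ i, RepEquiv σ (ρ i))

/-- The group determinant `Θ(G) = det (x_{g h⁻¹})_{g,h}`. -/
noncomputable def groupDet (G : Type*) [Group G] [Fintype G] [DecidableEq G] :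
    MvPolynomial G ℂ :=
  Matrix.det (Matrix.of fun g h : G => MvPolynomial.X (g * h⁻¹))

/-- For a chain `K ⊆ H ⊆ G`, the products `t u` of coset representatives form a complete
set of left coset representatives of `K` in `G`, and `L_U ∘ L_T = L_V`. -/
theorem leftRegular_comp (R : Type*) [CommRing R] (G : Type*) [Group G]
    (H K : Subgroup G) (hKH : K ≤ H) (m k l : ℕ)
    (t : Fin k → G) (ht : ∀ g : G, ∃! i : Fin k, (t i)⁻¹ * g ∈ H)
    (u : Fin l → H) (hu : ∀ h : H, ∃! j : Fin l, (u j)⁻¹ * h ∈ K.subgroupOf H)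
    (A : Matrix (Fin m) (Fin m) (MonoidAlgebra R G))
    (B : Matrix (Fin k × Fin m) (Fin k × Fin m) (MonoidAlgebra R H))
    (C : Matrix (Fin l × (Fin k × Fin m)) (Fin l × (Fin k × Fin m))
          (MonoidAlgebra R (K.subgroupOf H)))
    (hB : A * (Matrix.of fun (a : Fin m) (p : Fin k × Fin m) =>
            if a = p.2 then MonoidAlgebra.single (t p.1) (1 : R) else 0)
          = (Matrix.of fun (a : Fin m) (p : Fin k × Fin m) =>
              if a = p.2 then MonoidAlgebra.single (t p.1) (1 : R) else 0)
            * B.map (MonoidAlgebra.mapDomainAlgHom R R H.subtype))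
    (hC : B * (Matrix.of fun (p : Fin k × Fin m) (q : Fin l × (Fin k × Fin m)) =>
            if p = q.2 then MonoidAlgebra.single (u q.1) (1 : R) else 0)
          = (Matrix.of fun (p : Fin k × Fin m) (q : Fin l × (Fin k × Fin m)) =>
              if p = q.2 then MonoidAlgebra.single (u q.1) (1 : R) else 0)
            * C.map (MonoidAlgebra.mapDomainAlgHom R R (K.subgroupOf H).subtype)) :
    (∀ g : G, ∃! p : Fin l × Fin k, (t p.2 * (u p.1 : G))⁻¹ * g ∈ K) ∧
    A * (Matrix.of fun (a : Fin m) (q : Fin l × (Fin k × Fin m)) =>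
          if a = q.2.2 then MonoidAlgebra.single (t q.2.1 * (u q.1 : G)) (1 : R) else 0)
      = (Matrix.of fun (a : Fin m) (q : Fin l × (Fin k × Fin m)) =>
          if a = q.2.2 then MonoidAlgebra.single (t q.2.1 * (u q.1 : G)) (1 : R) else 0)
        * C.map (MonoidAlgebra.mapDomainAlgHom R R
            (H.subtype.comp (K.subgroupOf H).subtype)) := by
    classical
  set φ := MonoidAlgebra.mapDomainAlgHom R R H.subtype
  set ψ := MonoidAlgebra.mapDomainAlgHom R R (K.subgroupOf H).subtype
  set χ := MonoidAlgebra.mapDomainAlgHom R R (H.subtype.comp (K.subgroupOf H).subtype)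
  set P : Matrix (Fin m) (Fin k × Fin m) (MonoidAlgebra R G) :=
    Matrix.of fun (a : Fin m) (p : Fin k × Fin m) =>
      if a = p.2 then MonoidAlgebra.single (t p.1) (1 : R) else 0
  set Q : Matrix (Fin k × Fin m) (Fin l × (Fin k × Fin m)) (MonoidAlgebra R H) :=
    Matrix.of fun (p : Fin k × Fin m) (q : Fin l × (Fin k × Fin m)) =>
      if p = q.2 then MonoidAlgebra.single (u q.1) (1 : R) else 0
  set V : Matrix (Fin m) (Fin l × (Fin k × Fin m)) (MonoidAlgebra R G) :=
    Matrix.of fun (a : Fin m) (q : Fin l × (Fin k × Fin m)) =>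
      if a = q.2.2 then MonoidAlgebra.single (t q.2.1 * (u q.1 : G)) (1 : R) else 0
  constructor
  · intro g
    obtain ⟨i, hi, hiu⟩ := ht g
    obtain ⟨j, hj, hju⟩ := hu ⟨(t i)⁻¹ * g, hi⟩
    refine ⟨(j, i), ?_, ?_⟩
    · simpa [Subgroup.mem_subgroupOf, _root_.mul_inv_rev, mul_assoc] using hj
    · rintro ⟨j', i'⟩ hq
      simp only at hq
      have hqH : (u j' : G)⁻¹ * ((t i')⁻¹ * g) ∈ H := hKH (by
        simpa [_root_.mul_inv_rev, mul_assoc] using hq)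
      have hH : (t i')⁻¹ * g ∈ H := by
        have := H.mul_mem (u j').2 hqH
        simpa [mul_assoc] using this
      have hi' : i' = i := hiu i' hH
      subst hi'
      have hj'K : (u j')⁻¹ * (⟨(t i')⁻¹ * g, hi⟩ : H) ∈ K.subgroupOf H := by
        simpa [Subgroup.mem_subgroupOf, _root_.mul_inv_rev, mul_assoc] using hq
      have : j' = j := hju j' hj'K
      simp [this]
  · have hV : V = P * Q.map ⇑φ := by
      ext a q
      simp only [Matrix.mul_apply, Matrix.map_apply, Matrix.of_apply, V, P, Q]
      rw [Finset.sum_eq_single q.2]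
      · simp only [if_pos rfl]
        by_cases h : a = q.2.2
        · simp [h, φ, MonoidAlgebra.single_mul_single, MonoidAlgebra.mapDomain_single]
        · simp [h]
      · intro p _ hp
        simp [hp]
      · intro h
        exact absurd (Finset.mem_univ _) h
    have hcomp : (C.map ⇑ψ).map ⇑φ = C.map ⇑χ := by
      apply Matrix.ext; intro p q
      simp only [Matrix.map_apply]
      show φ (ψ (C p q)) = χ (C p q)
      induction (C p q) using MonoidAlgebra.induction_linear with
      | zero => simp
      | add f g hf hg => simp [map_add, hf, hg]
      | single a b =>
        simp [φ, ψ, χ, MonoidAlgebra.mapDomain_single]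
    have hmul1 : (B * Q).map ⇑φ = B.map ⇑φ * Q.map ⇑φ :=
      Matrix.map_mul (f := φ.toRingHom)
    have hmul2 : (Q * C.map ⇑ψ).map ⇑φ = Q.map ⇑φ * (C.map ⇑ψ).map ⇑φ :=
      Matrix.map_mul (f := φ.toRingHom)
    calc A * V = (A * P) * Q.map ⇑φ := by rw [hV, Matrix.mul_assoc]
      _ = (P * B.map ⇑φ) * Q.map ⇑φ := by rw [hB]
      _ = P * ((B * Q).map ⇑φ) := by rw [Matrix.mul_assoc, hmul1]
      _ = P * ((Q * C.map ⇑ψ).map ⇑φ) := by rw [hC]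
      _ = (P * Q.map ⇑φ) * (C.map ⇑ψ).map ⇑φ := by rw [hmul2, Matrix.mul_assoc]
      _ = V * C.map ⇑χ := by rw [hV, hcomp]
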